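/- Let X ⊆ ℂ^N be compact and let E be the largest perfect subset of X. Then (polynomial hull of E) \ E contains (polynomial hull of X) \ X. -/

import Mathlib

open MvPolynomial

noncomputable def polyHull {N : ℕ} (K : Set (Fin N → ℂ)) : Set (Fin N → ℂ) :=
  {z | ∀ p : MvPolynomial (Fin N) ℂ,
    ‖eval z p‖ ≤ sSup ((fun x => ‖eval x p‖) '' K)}

def IsPolyConvex {N : ℕ} (K : Set (Fin N → ℂ)) : Prop := polyHull K = K

def rationalHull {N : ℕ} (K : Set (Fin N → ℂ)) : Set (Fin N → ℂ) :=
  {z | ∀ p : MvPolynomial (Fin N) ℂ, eval z p = 0 → ∃ x ∈ K, eval x p = 0}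

noncomputable def polyHull1 (S : Set ℂ) : Set ℂ :=
  {w | ∀ p : Polynomial ℂ, ‖p.eval w‖ ≤ sSup ((fun s => ‖p.eval s‖) '' S)}

noncomputable def PX {N : ℕ} (X : Set (Fin N → ℂ)) : Set C(X, ℂ) :=
  closure {f : C(X, ℂ) | ∃ p : MvPolynomial (Fin N) ℂ,
    ∀ x : X, f x = eval (x : Fin N → ℂ) p}

def SameGleasonPart {N : ℕ} (H : Set (Fin N → ℂ)) (x y : Fin N → ℂ) : Prop :=
  ∃ c ≥ (1 : ℝ), ∀ p : MvPolynomial (Fin N) ℂ,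
    (∀ z ∈ H, (eval z p).re ≤ 0) →
    c * (eval y p).re ≤ (eval x p).re ∧ c * (eval x p).re ≤ (eval y p).re

lemma bddAboveEval {N : ℕ} {K : Set (Fin N → ℂ)} (hK : IsCompact K)
    (p : MvPolynomial (Fin N) ℂ) : BddAbove ((fun x => ‖eval x p‖) '' K) :=
  (hK.image ((MvPolynomial.continuous_eval p).norm)).bddAbove

lemma evalLeSSup {N : ℕ} {K : Set (Fin N → ℂ)} (hK : IsCompact K)
    (p : MvPolynomial (Fin N) ℂ) {x : Fin N → ℂ} (hx : x ∈ K) :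
    ‖eval x p‖ ≤ sSup ((fun x => ‖eval x p‖) '' K) :=
  le_csSup (bddAboveEval hK p) ⟨x, hx, rfl⟩

lemma sSupNonneg {N : ℕ} (K : Set (Fin N → ℂ)) (p : MvPolynomial (Fin N) ℂ) :
    0 ≤ sSup ((fun x => ‖eval x p‖) '' K) :=
  Real.sSup_nonneg (by rintro y ⟨x, _, rfl⟩; exact norm_nonneg _)

lemma polyHullEmpty {N : ℕ} {z : Fin N → ℂ} (h : z ∈ polyHull (∅ : Set (Fin N → ℂ))) :
    False := by
  have := h 1
  rw [Set.image_empty, Real.sSup_empty, map_one, norm_one] at this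
  linarith

lemma existsPow {s t M : ℝ} (hs : 0 ≤ s) (hst : s < t) (hM : 0 ≤ M) :
    ∃ n : ℕ, s ^ n * M < t ^ n := by
  have ht : 0 < t := lt_of_le_of_lt hs hst
  rcases eq_or_lt_of_le hM with hM0 | hM0
  · exact ⟨0, by rw [← hM0]; norm_num⟩
  rcases eq_or_lt_of_le hs with h | h
  · exact ⟨1, by rw [← h]; simpa using ht⟩
  · have hr1 : s / t < 1 := (div_lt_one ht).mpr hst
    obtain ⟨n, hn⟩ := exists_pow_lt_of_lt_one (show (0:ℝ) < 1/(M+1) by positivity) hr1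
    refine ⟨n, ?_⟩
    have h1 : (s / t) ^ n * M < (1/(M+1)) * M := mul_lt_mul_of_pos_right hn hM0
    have h2 : (1/(M+1)) * M < 1 := by
      rw [div_mul_eq_mul_div, one_mul, div_lt_one (by linarith)]; linarith
    have h3 : (s / t) ^ n * M < 1 := h1.trans h2
    have htn : (0:ℝ) < t ^ n := by positivity
    calc s ^ n * M = ((s/t) ^ n * M) * t ^ n := by
          field_simp [div_pow]
          rw [div_pow, div_mul_cancel₀ _ htn.ne']
      _ < 1 * t ^ n := mul_lt_mul_of_pos_right h3 htn
      _ = t ^ n := one_mul _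

lemma pointRemoval {N : ℕ} {K : Set (Fin N → ℂ)} (hK : IsCompact K) (a z : Fin N → ℂ)
    (hz : z ∈ polyHull (K ∪ {a})) (hza : z ≠ a) : z ∈ polyHull K := by
  by_contra hno
  simp only [polyHull, Set.mem_setOf_eq, not_forall, not_le] at hno
  obtain ⟨p, hp⟩ := hno
  obtain ⟨i, hi⟩ : ∃ i, z i ≠ a i := by
    by_contra h
    push_neg at h
    exact hza (funext h)
  set q : MvPolynomial (Fin N) ℂ := C (z i - a i)⁻¹ * (X i - C (a i)) with hq
  have hsub : z i - a i ≠ 0 := sub_ne_zero.mpr hi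
  have hqz : eval z q = 1 := by
    simp [hq]
    field_simp
  have hqa : eval a q = 0 := by simp [hq]
  set s := sSup ((fun x => ‖eval x p‖) '' K) with hsdef
  set t := ‖eval z p‖ with htdef
  have hs0 : 0 ≤ s := sSupNonneg K p
  set M := sSup ((fun x => ‖eval x q‖) '' K) with hMdef
  have hM0 : 0 ≤ M := sSupNonneg K q
  obtain ⟨n, hn⟩ := existsPow hs0 hp hM0
  have hmem := hz (p ^ n * q)
  have hlhs : ‖eval z (p ^ n * q)‖ = t ^ n := by
    rw [map_mul, map_pow, hqz, mul_one, norm_pow]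
  have hbound : sSup ((fun x => ‖eval x (p ^ n * q)‖) '' (K ∪ {a})) ≤ s ^ n * M := by
    apply Real.sSup_le
    · rintro y ⟨x, hx, rfl⟩
      rcases hx with hx | hx
      · have h1 : ‖eval x p‖ ≤ s := evalLeSSup hK p hx
        have h2 : ‖eval x q‖ ≤ M := evalLeSSup hK q hx
        simp only [map_mul, map_pow, norm_mul, norm_pow]
        exact mul_le_mul (pow_le_pow_left₀ (norm_nonneg _) h1 n) h2 (norm_nonneg _)
          (by positivity)
      · rcases hx with rfl
        simp only [map_mul, hqa, mul_zero, norm_zero]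
        positivity
    · positivity
  have : t ^ n ≤ s ^ n * M := by rw [← hlhs]; exact hmem.trans hbound
  linarith

lemma polyHullChainInter {N : ℕ} (z : Fin N → ℂ) (c : Set (Set (Fin N → ℂ)))
    (hchain : IsChain (· ⊆ ·) c) (hne : c.Nonempty)
    (hcomp : ∀ K ∈ c, IsCompact K) (hKne : ∀ K ∈ c, K.Nonempty)
    (hz : ∀ K ∈ c, z ∈ polyHull K) : z ∈ polyHull (⋂₀ c) := by
  intro p
  set T := ⋂₀ c with hT
  obtain ⟨K1, hK1⟩ := hne
  have hTsub : T ⊆ K1 := Set.sInter_subset_of_mem hK1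
  have hTclosed : IsClosed T :=
    isClosed_sInter (fun K hK => (hcomp K hK).isClosed)
  have hTcomp : IsCompact T := (hcomp K1 hK1).of_isClosed_subset hTclosed hTsub
  set s := sSup ((fun x => ‖eval x p‖) '' T) with hs
  refine le_of_forall_pos_le_add (fun ε hε => ?_)
  set U := {x : Fin N → ℂ | ‖eval x p‖ < s + ε} with hU
  have hUopen : IsOpen U :=
    isOpen_lt ((MvPolynomial.continuous_eval p).norm) continuous_const
  have hTU : T ⊆ U := fun x hx =>
    lt_of_le_of_lt (evalLeSSup hTcomp p hx) (by linarith)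
  -- some K in c is contained in U
  have hexists : ∃ K ∈ c, K ⊆ U := by
    by_contra hcon
    push_neg at hcon
    haveI : Nonempty c := ⟨⟨K1, hK1⟩⟩
    have hnonempty : (⋂ K : c, ((K : Set (Fin N → ℂ)) \ U)).Nonempty := by
      apply IsCompact.nonempty_iInter_of_directed_nonempty_isCompact_isClosed
      · rintro ⟨K, hK⟩ ⟨L, hL⟩
        rcases hchain.total hK hL with h | h
        · exact ⟨⟨K, hK⟩, Set.Subset.refl _, Set.diff_subset_diff_left h⟩
        · exact ⟨⟨L, hL⟩, Set.diff_subset_diff_left h, Set.Subset.refl _⟩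
      · rintro ⟨K, hK⟩
        rcases Set.not_subset.mp (hcon K hK) with ⟨x, hxK, hxU⟩
        exact ⟨x, hxK, hxU⟩
      · rintro ⟨K, hK⟩
        exact ((hcomp K hK).inter_right hUopen.isClosed_compl)
      · rintro ⟨K, hK⟩
        exact IsClosed.inter (hcomp K hK).isClosed hUopen.isClosed_compl
    obtain ⟨x, hx⟩ := hnonempty
    rw [Set.mem_iInter] at hx
    have hxT : x ∈ T := by
      rw [Set.mem_sInter]
      intro K hK
      exact (hx ⟨K, hK⟩).1
    exact (hx ⟨K1, hK1⟩).2 (hTU hxT)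
  obtain ⟨K0, hK0c, hK0U⟩ := hexists
  have h1 : ‖eval z p‖ ≤ sSup ((fun x => ‖eval x p‖) '' K0) := hz K0 hK0c p
  have h2 : sSup ((fun x => ‖eval x p‖) '' K0) ≤ s + ε := by
    apply Real.sSup_le
    · rintro y ⟨x, hx, rfl⟩
      exact le_of_lt (hK0U hx)
    · have := sSupNonneg T p
      linarith
  exact h1.trans h2

theorem stmt8 {N : ℕ} (X E : Set (Fin N → ℂ)) (hX : IsCompact X) (hEX : E ⊆ X)
    (hE : Perfect E) (hmax : ∀ F ⊆ X, Perfect F → F ⊆ E) :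
    polyHull X \ X ⊆ polyHull E \ E := by
  rintro z ⟨hzX, hznX⟩
  -- the family of compact sets between E and X whose hull contains z
  set Fam : Set (Set (Fin N → ℂ)) :=
    {K | IsCompact K ∧ E ⊆ K ∧ K ⊆ X ∧ z ∈ polyHull K} with hFam
  have hXFam : X ∈ Fam := ⟨hX, hEX, Set.Subset.refl _, hzX⟩
  -- Zorn's lemma gives a minimal element
  obtain ⟨S, -, hSFam, hSmin⟩ := zorn_superset_nonempty Fam (fun c hcF hchain hcne => by
    refine ⟨⋂₀ c, ⟨?_, ?_, ?_, ?_⟩, fun K hK => Set.sInter_subset_of_mem hK⟩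
    · obtain ⟨K1, hK1⟩ := hcne
      exact ((hcF hK1).1).of_isClosed_subset
        (isClosed_sInter (fun K hK => ((hcF hK).1).isClosed))
        (Set.sInter_subset_of_mem hK1)
    · exact Set.subset_sInter (fun K hK => (hcF hK).2.1)
    · obtain ⟨K1, hK1⟩ := hcne
      exact (Set.sInter_subset_of_mem hK1).trans (hcF hK1).2.2.1
    · refine polyHullChainInter z c hchain hcne (fun K hK => (hcF hK).1) ?_
        (fun K hK => (hcF hK).2.2.2)
      intro K hK
      rcases Set.eq_empty_or_nonempty K with rfl | h
      · exact absurd ((hcF hK).2.2.2) (fun h => polyHullEmpty h)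
      · exact h) X hXFam
  obtain ⟨hScomp, hES, hSX, hzS⟩ := hSFam
  -- S is perfect
  have hSperf : Perfect S := by
    constructor
    · exact hScomp.isClosed
    · intro x hxS
      by_contra hacc
      rw [accPt_iff_nhds] at hacc
      push_neg at hacc
      obtain ⟨U, hU, hUx⟩ := hacc
      obtain ⟨V, hVU, hVopen, hxV⟩ := mem_nhds_iff.mp hU
      -- S \ {x} = S \ V
      have hSx : S \ {x} = S \ V := by
        ext y
        constructor
        · rintro ⟨hyS, hyx⟩
          refine ⟨hyS, fun hyV => ?_⟩
          exact (Set.mem_singleton_iff.not.mp hyx) (hUx y ⟨hVU hyV, hyS⟩)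
        · rintro ⟨hyS, hyV⟩
          exact ⟨hyS, fun h => hyV (by rw [Set.mem_singleton_iff.mp h]; exact hxV)⟩
      have hcomp' : IsCompact (S \ {x}) := by
        rw [hSx]
        exact hScomp.diff hVopen
      -- x ∉ E
      have hxE : x ∉ E := by
        intro hxE
        have := (hE.acc x hxE).mono (Filter.principal_mono.mpr hES)
        rw [accPt_iff_nhds] at this
        obtain ⟨y, hy, hyx⟩ := this U hU
        exact hyx (hUx y ⟨hy.1, hy.2⟩)
      -- z in hull of S \ {x}
      have hzS' : z ∈ polyHull (S \ {x}) := by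
        apply pointRemoval hcomp' x z
        · have : (S \ {x}) ∪ {x} = S := by
            rw [Set.diff_union_self]
            exact Set.union_eq_self_of_subset_right (Set.singleton_subset_iff.mpr hxS)
          rwa [this]
        · exact fun h => hznX (h ▸ hSX hxS)
      have hmem : S \ {x} ∈ Fam :=
        ⟨hcomp', Set.subset_diff_singleton hES hxE, Set.diff_subset.trans hSX, hzS'⟩
      have hsub : S ⊆ S \ {x} := hSmin hmem Set.diff_subset
      exact (hsub hxS).2 rfl
  -- S = E
  have hSE : S = E := le_antisymm (hmax S hSX hSperf) hES
  rw [hSE] at hzS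
  exact ⟨hzS, fun h => hznX (hEX h)⟩
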